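/- Let a, b, c, d, t, x, ỹ ∈ ℂ with b ≠ 0, b ≠ c and a ≠ b. Set x₁ = a/b, x₂ = (a−c)/(b−c), x₃ = 1/b, x₄ = d/(b−c) and μ = b(b−c). Assume x₃·t − x₁ ≠ 0, and define t₁ = −1, t₂ = (x₃t − 1)/(x₃t − x₁), t₃ = x(1 − x₁)/(x₃t − x₁), and z = x₃(x₁ − 1)²·ỹ/(x₃t − x₁)³. Then z² = t₁t₂t₃(t₁ + t₂ + t₃)(t₁ + x₁t₂ + x₃t₃)(t₁ + x₂t₂ + x₄t₃) holds if and only if μ·ỹ² = x(x−1)(x−t)(t−a)(t−b)(t−c−d·x). (This is the birational equivalence between the double-sextic K3 family in Matsumoto's normal form and the μ-twist of the family X_{a,b,c,d}.) -/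

import Mathlib

lemma iff_of_mul_sub_eq {A C l r l' r' : ℂ} (hA : A ≠ 0) (hC : C ≠ 0)
    (h : A * (l - r) = C * (l' - r')) : l = r ↔ l' = r' := by
  constructor <;> intro hh
  · have h0 : C * (l' - r') = 0 := by rw [← h, hh]; ring
    have := (mul_eq_zero.mp h0).resolve_left hC
    linear_combination this
  · have h0 : A * (l - r) = 0 := by rw [h, hh]; ring
    have := (mul_eq_zero.mp h0).resolve_left hA
    linear_combination this

set_option maxHeartbeats 4000000 in
/-- Birational equivalence between the double-sextic K3 family in Matsumoto's normal
form and the `μ`-twist of the family `X_{a,b,c,d}`. -/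
theorem double_sextic_iff_mu_twist
    (a b c d t x yt : ℂ)
    (hb : b ≠ 0) (hbc : b ≠ c) (hab : a ≠ b)
    (x₁ x₂ x₃ x₄ μ : ℂ)
    (hx₁ : x₁ = a / b) (hx₂ : x₂ = (a - c) / (b - c)) (hx₃ : x₃ = 1 / b)
    (hx₄ : x₄ = d / (b - c)) (hμ : μ = b * (b - c))
    (hden : x₃ * t - x₁ ≠ 0)
    (t₁ t₂ t₃ z : ℂ)
    (ht₁ : t₁ = -1)
    (ht₂ : t₂ = (x₃*t - 1) / (x₃*t - x₁))
    (ht₃ : t₃ = x*(1 - x₁) / (x₃*t - x₁))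
    (hz : z = x₃*(x₁ - 1)^2*yt / (x₃*t - x₁)^3) :
    z^2 = t₁*t₂*t₃*(t₁ + t₂ + t₃)*(t₁ + x₁*t₂ + x₃*t₃)*(t₁ + x₂*t₂ + x₄*t₃) ↔
      μ * yt^2 = x*(x - 1)*(x - t)*(t - a)*(t - b)*(t - c - d*x) := by
  subst hx₁ hx₂ hx₃ hx₄ hμ ht₁ ht₂ ht₃ hz
  have hbc' : b - c ≠ 0 := sub_ne_zero.mpr hbc
  have hab' : a - b ≠ 0 := sub_ne_zero.mpr hab
  have hta : t - a ≠ 0 := by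
    intro h
    apply hden
    rw [sub_eq_zero] at h
    subst h
    field_simp
    ring
  have e2 : (1/b*t - 1)/(1/b*t - a/b) = (t - b)/(t - a) := by
    rw [div_eq_div_iff hden hta]
    field_simp
  have e3 : x*(1 - a/b)/(1/b*t - a/b) = x*(b - a)/(t - a) := by
    rw [div_eq_div_iff hden hta]
    field_simp
  have ez : 1/b*(a/b - 1)^2*yt/(1/b*t - a/b)^3 = (a - b)^2*yt/(t - a)^3 := by
    rw [div_eq_div_iff (pow_ne_zero 3 hden) (pow_ne_zero 3 hta)]
    field_simp
  have g1 : (-1 : ℂ) + (t - b)/(t - a) + x*(b - a)/(t - a) =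
      (b - a)*(x - 1)/(t - a) := by
    field_simp
    ring
  have g2 : (-1 : ℂ) + a/b*((t - b)/(t - a)) + 1/b*(x*(b - a)/(t - a)) =
      (b - a)*(x - t)/(b*(t - a)) := by
    field_simp
    ring
  have g3 : (-1 : ℂ) + (a - c)/(b - c)*((t - b)/(t - a)) + d/(b - c)*(x*(b - a)/(t - a)) =
      (b - a)*(c + d*x - t)/((b - c)*(t - a)) := by
    field_simp
    ring
  have hD2 : (t - a)*(t - a)*(t - a)*(b*(t - a))*((b - c)*(t - a)) ≠ 0 :=
    mul_ne_zero (mul_ne_zero (mul_ne_zero (mul_ne_zero hta hta) hta)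
      (mul_ne_zero hb hta)) (mul_ne_zero hbc' hta)
  rw [e2, e3, ez, g1, g2, g3, div_pow, neg_one_mul, ← neg_div,
    div_mul_div_comm, div_mul_div_comm, div_mul_div_comm, div_mul_div_comm,
    div_eq_div_iff (pow_ne_zero 2 (pow_ne_zero 3 hta)) hD2]
  exact iff_of_mul_sub_eq one_ne_zero
    (mul_ne_zero (pow_ne_zero 4 hab') (pow_ne_zero 5 hta)) (by ring1)
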